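/- Let (A,σ) be a difference ring whose ring of constants K := const(A,σ) is a field. Let e ≥ 1, let β_1,…,β_e ∈ A, and let E := A[t_1,…,t_e] be the polynomial ring in e variables over A, equipped with the unique ring automorphism extending σ (acting on coefficients) such that σ(t_i) = t_i + β_i for all i. Assume const(E,σ) = const(A,σ), i.e., every f ∈ E with σ(f) = f is a constant polynomial with coefficient in K. Then every g ∈ E with σ(g) − g ∈ A can be written as g = c_1·t_1 + ⋯ + c_e·t_e + w with c_1,…,c_e ∈ K and w ∈ A. -/

import Mathlib

open MvPolynomial

lemma coeff_pderiv' {n : Type*} [DecidableEq n] {R : Type*} [CommRing R] (i : n) (m : n →₀ ℕ)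
    (f : MvPolynomial n R) :
    coeff m (pderiv i f) = (m i + 1 : ℕ) * coeff (m + Finsupp.single i 1) f := by
  induction f using MvPolynomial.induction_on' with
  | monomial s a =>
    rw [pderiv_monomial, coeff_monomial, coeff_monomial]
    by_cases h : s = m + Finsupp.single i 1
    · subst h
      have h2 : m + Finsupp.single i 1 - Finsupp.single i 1 = m :=
        add_tsub_cancel_right m (Finsupp.single i 1)
      rw [if_pos h2, Finsupp.add_apply, Finsupp.single_eq_same]
      simp
      ring
    · rw [if_neg h, mul_zero]
      by_cases h2 : s - Finsupp.single i 1 = m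
      · rw [if_pos h2]
        by_cases h3 : s i = 0
        · simp [h3]
        · exfalso; apply h
          ext j
          have hj2 := DFunLike.congr_fun h2 j
          rw [Finsupp.tsub_apply, Finsupp.single_apply] at hj2
          rw [Finsupp.add_apply, Finsupp.single_apply]
          by_cases hj : i = j
          · subst hj; simp at hj2 ⊢; omega
          · simp [hj] at hj2 ⊢; omega
      · rw [if_neg h2]
  | add p q hp hq =>
    simp [hp, hq, mul_add]

lemma eq_C_of_pderiv_zero {n : Type*} [DecidableEq n] {R : Type*} [CommRing R] [Algebra ℚ R]
    (f : MvPolynomial n R) (hf : ∀ i, pderiv i f = 0) :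
    f = C (constantCoeff f) := by
  ext m
  rw [coeff_C]
  by_cases hm : 0 = m
  · rw [if_pos hm, ← hm]; rfl
  · rw [if_neg hm]
    obtain ⟨i, hi⟩ : ∃ i, m i ≠ 0 := by
      by_contra h
      push_neg at h
      exact hm (by ext j; simp [h j])
    set m' : n →₀ ℕ := m - Finsupp.single i 1 with hm'
    have hadd : m' + Finsupp.single i 1 = m := by
      ext j
      rw [Finsupp.add_apply, Finsupp.tsub_apply, Finsupp.single_apply]
      by_cases hj : i = j
      · subst hj; simp; omega
      · simp [hj]
    have := coeff_pderiv' i m' f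
    rw [hf i, hadd] at this
    simp only [coeff_zero] at this
    have hu : IsUnit ((m' i + 1 : ℕ) : R) := by
      have : ((m' i + 1 : ℕ) : R) = algebraMap ℚ R ((m' i + 1 : ℕ) : ℚ) := by
        push_cast; simp
      rw [this]
      exact (IsUnit.map (algebraMap ℚ R)
        (isUnit_iff_ne_zero.mpr (by positivity)))
    exact (hu.mul_right_eq_zero).mp this.symm

/-- Let `(A,σ)` be a difference ring whose ring of constants `K` is a
field, and let `E = A[t_1,…,t_e]` be a ΣΣ*-extension with `σ(t_i) = t_i + β_i`,
`β_i ∈ A` (i.e. `const(E,σ) = const(A,σ)`). Then every `g ∈ E` with `σ(g) − g ∈ A`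
is of the form `g = c_1·t_1 + ⋯ + c_e·t_e + w` with `c_i ∈ K` and `w ∈ A`. -/
theorem stmt18 {A : Type*} [CommRing A] [Algebra ℚ A] [Nontrivial A]
    (σ : A ≃+* A)
    (hK : ∀ c : A, σ c = c → c ≠ 0 → IsUnit c)
    (e : ℕ) (he : 1 ≤ e)
    (β : Fin e → A)
    (σE : MvPolynomial (Fin e) A ≃+* MvPolynomial (Fin e) A)
    (hEC : ∀ a : A, σE (MvPolynomial.C a) = MvPolynomial.C (σ a))
    (hEX : ∀ i, σE (MvPolynomial.X i) = MvPolynomial.X i + MvPolynomial.C (β i))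
    (hconst : ∀ f : MvPolynomial (Fin e) A, σE f = f →
        ∃ c : A, σ c = c ∧ f = MvPolynomial.C c) :
    ∀ g : MvPolynomial (Fin e) A, (∃ a : A, σE g - g = MvPolynomial.C a) →
      ∃ (c : Fin e → A) (w : A), (∀ i, σ (c i) = c i) ∧
        g = (∑ i, MvPolynomial.C (c i) * MvPolynomial.X i) + MvPolynomial.C w := by
  -- σE commutes with pderiv
  have hcomm : ∀ (i : Fin e) (f : MvPolynomial (Fin e) A),
      pderiv i (σE f) = σE (pderiv i f) := by
    intro i f
    induction f using MvPolynomial.induction_on with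
    | C a => rw [hEC, pderiv_C, pderiv_C, map_zero]
    | add p q hp hq => rw [map_add, map_add, map_add, hp, hq, map_add]
    | mul_X p j hp =>
      rw [map_mul, pderiv_mul, pderiv_mul, map_add, map_mul, map_mul, hp, hEX]
      congr 1
      by_cases hij : j = i
      · subst hij
        rw [pderiv_X_self, map_add, pderiv_X_self, pderiv_C, add_zero, map_one]
      · rw [pderiv_X_of_ne hij, map_add, pderiv_X_of_ne hij, pderiv_C, add_zero, map_zero]
  intro g ⟨a, ha⟩
  have hgd : σE g = g + MvPolynomial.C a := by rw [← ha]; ring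
  -- each pderiv i g is σE-invariant
  have hfix : ∀ i, σE (pderiv i g) = pderiv i g := by
    intro i
    rw [← hcomm, hgd, map_add, pderiv_C, add_zero]
  choose c hc hgc using fun i => hconst (pderiv i g) (hfix i)
  set h := g - ∑ i, MvPolynomial.C (c i) * MvPolynomial.X i with hh
  have hpd : ∀ i, pderiv i h = 0 := by
    intro i
    rw [hh, map_sub, map_sum, hgc i]
    rw [Finset.sum_eq_single i]
    · rw [pderiv_mul, pderiv_C, pderiv_X_self]; ring
    · intro j _ hji
      rw [pderiv_mul, pderiv_C, pderiv_X_of_ne hji]; ring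
    · intro habs; exact absurd (Finset.mem_univ i) habs
  refine ⟨c, constantCoeff h, hc, ?_⟩
  have := eq_C_of_pderiv_zero h hpd
  rw [hh] at this ⊢
  linear_combination (norm := ring_nf) this
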